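/- The quadratic function f(x) = x₁² + 2x₂² + x₃² + 2x₁x₂ + 2x₂x₃ on ℤ³ (with coefficient matrix A having rows (1,1,0), (1,2,1), (0,1,1)) is multimodular, but the function f̃(x₁,x₂,x₃) = f(x₂,x₁,x₃) obtained by transposing the first two variables is not multimodular. Hence multimodularity is not preserved by arbitrary permutations of variables. -/

import Mathlib

/-- The set of multimodular directions
`F = {-e₁, e₁-e₂, e₂-e₃, …, e_{n-1}-eₙ, eₙ}` (1-indexed unit vectors). -/
def mmDir (n : ℕ) : Set (Fin n → ℤ) :=
  {d | ∃ k ≤ n, d = fun j : Fin n =>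
    (if (j : ℕ) + 1 = k then 1 else 0) - (if (j : ℕ) + 1 = k + 1 then 1 else 0)}

/-- `f : ℤⁿ → ℝ ∪ {+∞}` is multimodular. -/
def Multimodular {n : ℕ} (f : (Fin n → ℤ) → WithTop ℝ) : Prop :=
  ∀ z : Fin n → ℤ, f z ≠ ⊤ →
    ∀ d ∈ mmDir n, ∀ d' ∈ mmDir n, d ≠ d' →
      f z + f (z + d + d') ≤ f (z + d) + f (z + d')

/-- Submodularity on `ℤᵐ`. -/
def Submodular {m : ℕ} (h : (Fin m → ℤ) → WithTop ℝ) : Prop :=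
  ∀ x y : Fin m → ℤ, h (x ⊔ y) + h (x ⊓ y) ≤ h x + h y

/-- L♮-convexity via discrete midpoint convexity. -/
def LnatConvex {n : ℕ} (g : (Fin n → ℤ) → WithTop ℝ) : Prop :=
  ∀ p q : Fin n → ℤ,
    g (fun j => Int.fdiv (p j + q j + 1) 2) + g (fun j => Int.fdiv (p j + q j) 2)
      ≤ g p + g q

/-- The quadratic `f(x) = x₁² + 2x₂² + x₃² + 2x₁x₂ + 2x₂x₃`. -/
noncomputable def fEx10 : (Fin 3 → ℤ) → WithTop ℝ := fun x =>
  (((x 0 : ℝ) ^ 2 + 2 * (x 1 : ℝ) ^ 2 + (x 2 : ℝ) ^ 2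
      + 2 * (x 0 : ℝ) * (x 1 : ℝ) + 2 * (x 1 : ℝ) * (x 2 : ℝ) : ℝ) : WithTop ℝ)

private lemma mm_key : ∀ a b c d : ℝ, a + b ≤ c + d →
    (a : WithTop ℝ) + b ≤ (c : WithTop ℝ) + d := by
  intro a b c d h; exact_mod_cast h

theorem multimodular_not_preserved_by_transposition :
    Multimodular fEx10 ∧
      ¬ Multimodular (fun x : Fin 3 → ℤ => fEx10 ![x 1, x 0, x 2]) := by
  constructor
  · rintro z _ d ⟨k, hk, rfl⟩ d' ⟨k', hk', rfl⟩ hne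
    interval_cases k <;> interval_cases k' <;>
      first
        | exact absurd rfl hne
        | (refine mm_key _ _ _ _ ?_
           simp only [Pi.add_apply, Fin.isValue]
           norm_num
           nlinarith [sq_nonneg ((z 0 : ℝ)), sq_nonneg ((z 1 : ℝ))])
  · intro h
    have h1 : (fun x : Fin 3 → ℤ => fEx10 ![x 1, x 0, x 2]) 0 ≠ ⊤ := by
      simp [fEx10]
    have hd : (fun j : Fin 3 =>
        ((if (j : ℕ) + 1 = 1 then 1 else 0) - (if (j : ℕ) + 1 = 1 + 1 then 1 else 0) : ℤ))
        ∈ mmDir 3 := ⟨1, by norm_num, rfl⟩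
    have hd' : (fun j : Fin 3 =>
        ((if (j : ℕ) + 1 = 3 then 1 else 0) - (if (j : ℕ) + 1 = 3 + 1 then 1 else 0) : ℤ))
        ∈ mmDir 3 := ⟨3, by norm_num, rfl⟩
    have hne : (fun j : Fin 3 =>
        ((if (j : ℕ) + 1 = 1 then 1 else 0) - (if (j : ℕ) + 1 = 1 + 1 then 1 else 0) : ℤ)) ≠
        (fun j : Fin 3 =>
        ((if (j : ℕ) + 1 = 3 then 1 else 0) - (if (j : ℕ) + 1 = 3 + 1 then 1 else 0) : ℤ)) := by
      intro he
      have := congrFun he 0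
      norm_num at this
    have := h 0 h1 _ hd _ hd' hne
    simp only [Pi.add_apply, Fin.isValue] at this
    norm_num [fEx10] at this
    have h4 : (4:ℝ) ≤ 2 := by
      simp only [Matrix.cons_val_two, Matrix.vecHead, Matrix.vecTail] at this
      norm_num at this
      have h5 : (4:ℝ) ≤ 3 + -2 + 1 := WithTop.coe_le_coe.mp this
      linarith
    linarith
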